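/- Let Q₀, Q₁ ⊆ ℝⁿ₋ be nonempty closed convex sets complete with respect to ℝⁿ₋ (Q_j + ℝⁿ₋ ⊆ Q_j), with finite support functions on ℝⁿ₊. For t ∈ (0,1) and c₀, c₁ > 0, define g_t(a) = (1-t)·max(h_{Q₀}(a)+c₀, 0) + t·max(h_{Q₁}(a)+c₁, 0) for a ∈ ℝⁿ₊ (extended by +∞ off ℝⁿ₊), and let u_t = L[g_t] be its Legendre transform restricted to ℝⁿ₋. Then the set {s ∈ ℝⁿ₋ : u_t(s) ≤ -((1-t)c₀ + t c₁)} equals the Minkowski combination (1-t)Q₀ + tQ₁ (closure thereof). -/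
import Mathlib


open Pointwise

noncomputable def supp {n : ℕ} (Q : Set (Fin n → ℝ)) (x : Fin n → ℝ) : ℝ :=
  sSup ((fun y => ∑ i, x i * y i) '' Q)

set_option maxHeartbeats 1000000 in
theorem stmt13 (n : ℕ) (Q₀ Q₁ : Set (Fin n → ℝ))
    (hQ₀ : Q₀.Nonempty) (hQ₁ : Q₁.Nonempty)
    (hQ₀sub : Q₀ ⊆ {s | ∀ i, s i ≤ 0}) (hQ₁sub : Q₁ ⊆ {s | ∀ i, s i ≤ 0})
    (hQ₀cl : IsClosed Q₀) (hQ₁cl : IsClosed Q₁)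
    (hQ₀cv : Convex ℝ Q₀) (hQ₁cv : Convex ℝ Q₁)
    (hQ₀comp : Q₀ + {s : Fin n → ℝ | ∀ i, s i ≤ 0} ⊆ Q₀)
    (hQ₁comp : Q₁ + {s : Fin n → ℝ | ∀ i, s i ≤ 0} ⊆ Q₁)
    (hfin₀ : ∀ a ∈ {x : Fin n → ℝ | ∀ i, 0 ≤ x i}, BddAbove ((fun y => ∑ i, a i * y i) '' Q₀))
    (hfin₁ : ∀ a ∈ {x : Fin n → ℝ | ∀ i, 0 ≤ x i}, BddAbove ((fun y => ∑ i, a i * y i) '' Q₁))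
    (t : ℝ) (ht : t ∈ Set.Ioo (0:ℝ) 1) (c₀ c₁ : ℝ) (hc₀ : 0 < c₀) (hc₁ : 0 < c₁)
    (g : (Fin n → ℝ) → EReal)
    (hg : ∀ a : Fin n → ℝ, g a =
      if a ∈ {x : Fin n → ℝ | ∀ i, 0 ≤ x i} then
        (((1 - t) * max (supp Q₀ a + c₀) 0 + t * max (supp Q₁ a + c₁) 0 : ℝ) : EReal)
      else ⊤)
    (u : (Fin n → ℝ) → EReal)
    (hu : ∀ s : Fin n → ℝ, u s = ⨆ a : Fin n → ℝ, (((∑ i, a i * s i : ℝ) : EReal) - g a)) :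
    {s ∈ {s : Fin n → ℝ | ∀ i, s i ≤ 0} | u s ≤ ((-((1 - t) * c₀ + t * c₁) : ℝ) : EReal)} =
      closure ((1 - t) • Q₀ + t • Q₁) := by
  obtain ⟨ht0, ht1⟩ := ht
  have h1t : (0:ℝ) < 1 - t := by linarith
  set ct : ℝ := (1 - t) * c₀ + t * c₁ with hct
  set S : Set (Fin n → ℝ) := (1 - t) • Q₀ + t • Q₁ with hS
  -- basic facts
  have hip : ∀ (a s : Fin n → ℝ), (∀ i, 0 ≤ a i) → (∀ i, s i ≤ 0) → ∑ i, a i * s i ≤ 0 :=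
    fun a s ha hs => Finset.sum_nonpos fun i _ => mul_nonpos_of_nonneg_of_nonpos (ha i) (hs i)
  have hle₀ : ∀ a ∈ {x : Fin n → ℝ | ∀ i, 0 ≤ x i}, ∀ y ∈ Q₀, ∑ i, a i * y i ≤ supp Q₀ a :=
    fun a ha y hy => le_csSup (hfin₀ a ha) ⟨y, hy, rfl⟩
  have hle₁ : ∀ a ∈ {x : Fin n → ℝ | ∀ i, 0 ≤ x i}, ∀ y ∈ Q₁, ∑ i, a i * y i ≤ supp Q₁ a :=
    fun a ha y hy => le_csSup (hfin₁ a ha) ⟨y, hy, rfl⟩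
  have hnp₀ : ∀ a ∈ {x : Fin n → ℝ | ∀ i, 0 ≤ x i}, supp Q₀ a ≤ 0 := by
    intro a ha
    refine csSup_le (hQ₀.image _) ?_
    rintro x ⟨y, hy, rfl⟩
    exact hip a y ha (hQ₀sub hy)
  have hnp₁ : ∀ a ∈ {x : Fin n → ℝ | ∀ i, 0 ≤ x i}, supp Q₁ a ≤ 0 := by
    intro a ha
    refine csSup_le (hQ₁.image _) ?_
    rintro x ⟨y, hy, rfl⟩
    exact hip a y ha (hQ₁sub hy)
  -- homogeneity of supp
  have hom : ∀ (Q : Set (Fin n → ℝ)) (a : Fin n → ℝ) (l : ℝ), 0 ≤ l →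
      supp Q (fun i => l * a i) = l * supp Q a := by
    intro Q a l hl
    have hcomp : (fun y : Fin n → ℝ => ∑ i, (l * a i) * y i)
        = (fun x : ℝ => l * x) ∘ (fun y : Fin n → ℝ => ∑ i, a i * y i) := by
      funext y
      simp [Function.comp, Finset.mul_sum, mul_assoc]
    have himg : (fun x : ℝ => l * x) '' ((fun y : Fin n → ℝ => ∑ i, a i * y i) '' Q)
        = l • ((fun y : Fin n → ℝ => ∑ i, a i * y i) '' Q) := by
      ext x
      simp [Set.mem_smul_set, smul_eq_mul, eq_comm]
    rw [supp, hcomp, Set.image_comp, himg, Real.sSup_smul_of_nonneg hl, smul_eq_mul]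
    rfl
  -- closedness of the sublevel set
  have hclosedU : IsClosed {s : Fin n → ℝ | u s ≤ ((-ct : ℝ) : EReal)} := by
    have hrw : {s : Fin n → ℝ | u s ≤ ((-ct : ℝ) : EReal)}
        = ⋂ a : Fin n → ℝ, {s | (((∑ i, a i * s i : ℝ) : EReal) - g a) ≤ ((-ct : ℝ) : EReal)} := by
      ext s
      simp only [Set.mem_setOf_eq, Set.mem_iInter, hu s, iSup_le_iff]
    rw [hrw]
    refine isClosed_iInter fun a => ?_
    by_cases ha : a ∈ {x : Fin n → ℝ | ∀ i, 0 ≤ x i}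
    · have hset : {s : Fin n → ℝ | (((∑ i, a i * s i : ℝ) : EReal) - g a) ≤ ((-ct : ℝ) : EReal)}
          = {s : Fin n → ℝ | ∑ i, a i * s i
              ≤ ((1 - t) * max (supp Q₀ a + c₀) 0 + t * max (supp Q₁ a + c₁) 0) - ct} := by
        ext s
        rw [Set.mem_setOf_eq, hg a, if_pos ha, ← EReal.coe_sub, EReal.coe_le_coe_iff,
          Set.mem_setOf_eq]
        constructor <;> intro h <;> linarith
      rw [hset]
      exact isClosed_le (continuous_finset_sum _ fun i _ =>
        (continuous_const.mul (continuous_apply i))) continuous_const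
    · have hset : {s : Fin n → ℝ | (((∑ i, a i * s i : ℝ) : EReal) - g a) ≤ ((-ct : ℝ) : EReal)}
          = Set.univ := by
        refine Set.eq_univ_of_forall fun s => ?_
        rw [Set.mem_setOf_eq, hg a, if_neg ha, EReal.sub_top]
        exact bot_le
      rw [hset]
      exact isClosed_univ
  have hNcl : IsClosed {s : Fin n → ℝ | ∀ i, s i ≤ 0} := by
    have : {s : Fin n → ℝ | ∀ i, s i ≤ 0} = ⋂ i, {s : Fin n → ℝ | s i ≤ 0} := by
      ext s; simp
    rw [this]
    exact isClosed_iInter fun i => isClosed_le (continuous_apply i) continuous_const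
  have hLHScl : IsClosed {s ∈ {s : Fin n → ℝ | ∀ i, s i ≤ 0} | u s ≤ ((-ct : ℝ) : EReal)} := by
    have : {s ∈ {s : Fin n → ℝ | ∀ i, s i ≤ 0} | u s ≤ ((-ct : ℝ) : EReal)}
        = {s : Fin n → ℝ | ∀ i, s i ≤ 0} ∩ {s : Fin n → ℝ | u s ≤ ((-ct : ℝ) : EReal)} := rfl
    rw [this]
    exact hNcl.inter hclosedU
  -- easy inclusion: S ⊆ LHS
  have hSsub : S ⊆ {s ∈ {s : Fin n → ℝ | ∀ i, s i ≤ 0} | u s ≤ ((-ct : ℝ) : EReal)} := by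
    rintro z ⟨x, hx, y, hy, rfl⟩
    obtain ⟨y₀, hy₀, rfl⟩ := hx
    obtain ⟨y₁, hy₁, rfl⟩ := hy
    show ((1 - t) • y₀ + t • y₁) ∈ _
    have hzc : ∀ i, ((1 - t) • y₀ + t • y₁) i = (1 - t) * y₀ i + t * y₁ i := by
      intro i; simp [smul_eq_mul]
    constructor
    · intro i
      rw [hzc i]
      have := hQ₀sub hy₀ i
      have := hQ₁sub hy₁ i
      nlinarith
    · rw [hu]
      refine iSup_le fun a => ?_
      by_cases ha : a ∈ {x : Fin n → ℝ | ∀ i, 0 ≤ x i}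
      · rw [hg a, if_pos ha, ← EReal.coe_sub, EReal.coe_le_coe_iff]
        have hsum : ∑ i, a i * ((1 - t) • y₀ + t • y₁) i
            = (1 - t) * ∑ i, a i * y₀ i + t * ∑ i, a i * y₁ i := by
          rw [Finset.mul_sum, Finset.mul_sum, ← Finset.sum_add_distrib]
          refine Finset.sum_congr rfl fun i _ => ?_
          rw [hzc i]; ring
        rw [hsum]
        have h0 := hle₀ a ha y₀ hy₀
        have h1 := hle₁ a ha y₁ hy₁
        have hm0 : supp Q₀ a + c₀ ≤ max (supp Q₀ a + c₀) 0 := le_max_left _ _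
        have hm1 : supp Q₁ a + c₁ ≤ max (supp Q₁ a + c₁) 0 := le_max_left _ _
        nlinarith [mul_le_mul_of_nonneg_left h0 (le_of_lt h1t),
          mul_le_mul_of_nonneg_left h1 (le_of_lt ht0),
          mul_le_mul_of_nonneg_left hm0 (le_of_lt h1t),
          mul_le_mul_of_nonneg_left hm1 (le_of_lt ht0)]
      · rw [hg a, if_neg ha, EReal.sub_top]
        exact bot_le
  refine Set.Subset.antisymm ?_ (closure_minimal hSsub hLHScl)
  intro s hs
  obtain ⟨hsN, hsu⟩ := hs
  by_contra hsQ
  -- separation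
  have hScv : Convex ℝ (closure S) := ((hQ₀cv.smul _).add (hQ₁cv.smul _)).closure
  obtain ⟨f, r, hfr, hrs⟩ := geometric_hahn_banach_closed_point hScv isClosed_closure hsQ
  set a : Fin n → ℝ := fun i => f (fun j => if i = j then (1:ℝ) else 0) with haa
  have hfy : ∀ x : Fin n → ℝ, f x = ∑ i, a i * x i := by
    intro x
    have h := LinearMap.pi_apply_eq_sum_univ (f : (Fin n → ℝ) →ₗ[ℝ] ℝ) x
    simp only [ContinuousLinearMap.coe_coe] at h
    rw [h]
    exact Finset.sum_congr rfl fun i _ => by rw [smul_eq_mul, mul_comm]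
  obtain ⟨y₀, hy₀⟩ := hQ₀
  obtain ⟨y₁, hy₁⟩ := hQ₁
  have hmemS : ∀ z₀ ∈ Q₀, ∀ z₁ ∈ Q₁, (1 - t) • z₀ + t • z₁ ∈ S := by
    intro z₀ hz₀ z₁ hz₁
    exact ⟨(1 - t) • z₀, ⟨z₀, hz₀, rfl⟩, t • z₁, ⟨z₁, hz₁, rfl⟩, rfl⟩
  -- a has nonneg coordinates
  have haP : a ∈ {x : Fin n → ℝ | ∀ i, 0 ≤ x i} := by
    intro i
    by_contra hai
    push_neg at hai
    set z0 : Fin n → ℝ := (1 - t) • y₀ + t • y₁ with hz0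
    have hz0S : z0 ∈ S := hmemS y₀ hy₀ y₁ hy₁
    set R : ℝ := (r - f z0) / (-a i) with hR
    have hfz0 : f z0 < r := hfr z0 (subset_closure hz0S)
    have hRpos : 0 ≤ R := by
      apply div_nonneg <;> linarith
    set w : Fin n → ℝ := (-R) • (fun j => if i = j then (1:ℝ) else 0) with hw
    have hwN : (fun j => (1/(1-t)) * w j) ∈ {s : Fin n → ℝ | ∀ i, s i ≤ 0} := by
      intro j
      have hwj : w j ≤ 0 := by
        simp only [hw, Pi.smul_apply, smul_eq_mul]
        by_cases hij : i = j
        · simp only [if_pos hij]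
          nlinarith
        · simp [hij]
      exact mul_nonpos_of_nonneg_of_nonpos (by positivity) hwj
    have hmem : z0 + w ∈ S := by
      have : z0 + w = (1 - t) • (y₀ + fun j => (1/(1-t)) * w j) + t • y₁ := by
        funext j
        simp only [hz0, Pi.add_apply, Pi.smul_apply, smul_eq_mul]
        field_simp
        ring
      rw [this]
      exact hmemS _ (hQ₀comp ⟨y₀, hy₀, _, hwN, rfl⟩) y₁ hy₁
    have hfw : f (z0 + w) = f z0 + (-R) * a i := by
      rw [map_add, hw, map_smul, smul_eq_mul]
    have := hfr _ (subset_closure hmem)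
    rw [hfw] at this
    have hne : -(a i) ≠ 0 := ne_of_gt (by linarith)
    have hRa : R * (-(a i)) = r - f z0 := div_mul_cancel₀ _ hne
    have hneg : -R * a i = R * (-(a i)) := by ring
    linarith
  -- key: pairing with a bounded by the combined support function
  have hkey : ∑ i, a i * s i ≤ (1 - t) * supp Q₀ a + t * supp Q₁ a := by
    set h₀ : ℝ := supp Q₀ a with hh₀
    set h₁ : ℝ := supp Q₁ a with hh₁
    have hh₀np : h₀ ≤ 0 := hnp₀ a haP
    have hh₁np : h₁ ≤ 0 := hnp₁ a haP
    set l : ℝ := min (c₀ / (1 - h₀)) (c₁ / (1 - h₁)) with hl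
    have hd₀ : (0:ℝ) < 1 - h₀ := by linarith
    have hd₁ : (0:ℝ) < 1 - h₁ := by linarith
    have hlpos : 0 < l := lt_min (div_pos hc₀ hd₀) (div_pos hc₁ hd₁)
    have hl₀ : 0 ≤ l * h₀ + c₀ := by
      have : l ≤ c₀ / (1 - h₀) := min_le_left _ _
      have := (le_div_iff₀ hd₀).mp this
      nlinarith
    have hl₁ : 0 ≤ l * h₁ + c₁ := by
      have : l ≤ c₁ / (1 - h₁) := min_le_right _ _
      have := (le_div_iff₀ hd₁).mp this
      nlinarith
    set a' : Fin n → ℝ := fun i => l * a i with ha'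
    have ha'P : a' ∈ {x : Fin n → ℝ | ∀ i, 0 ≤ x i} :=
      fun i => mul_nonneg (le_of_lt hlpos) (haP i)
    have hterm : (((∑ i, a' i * s i : ℝ) : EReal) - g a') ≤ ((-ct : ℝ) : EReal) := by
      refine le_trans ?_ hsu
      rw [hu s]
      exact le_iSup (fun b => (((∑ i, b i * s i : ℝ) : EReal) - g b)) a'
    have hsupp0 : supp Q₀ a' = l * h₀ := hom Q₀ a l (le_of_lt hlpos)
    have hsupp1 : supp Q₁ a' = l * h₁ := hom Q₁ a l (le_of_lt hlpos)
    rw [hg a', if_pos ha'P, hsupp0, hsupp1, max_eq_left (by linarith),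
      max_eq_left (by linarith), ← EReal.coe_sub, EReal.coe_le_coe_iff] at hterm
    have hsum : ∑ i, a' i * s i = l * ∑ i, a i * s i := by
      rw [Finset.mul_sum]
      exact Finset.sum_congr rfl fun i _ => by rw [ha']; ring
    rw [hsum] at hterm
    have : l * ∑ i, a i * s i ≤ l * ((1 - t) * h₀ + t * h₁) := by nlinarith
    exact le_of_mul_le_mul_left (by linarith) hlpos
  -- the combined support value is at most r
  have hbound : (1 - t) * supp Q₀ a + t * supp Q₁ a ≤ r := by
    by_contra hb
    push_neg at hb
    set d : ℝ := (1 - t) * supp Q₀ a + t * supp Q₁ a - r with hd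
    have hdpos : 0 < d := by linarith
    have hlt₀ : supp Q₀ a - d < sSup ((fun y => ∑ i, a i * y i) '' Q₀) := by
      have h : supp Q₀ a - d < supp Q₀ a := by linarith
      exact h
    have hlt₁ : supp Q₁ a - d < sSup ((fun y => ∑ i, a i * y i) '' Q₁) := by
      have h : supp Q₁ a - d < supp Q₁ a := by linarith
      exact h
    obtain ⟨x₀, hx₀mem, hx₀⟩ := exists_lt_of_lt_csSup
      ((Set.nonempty_of_mem hy₀).image (fun y => ∑ i, a i * y i)) hlt₀
    obtain ⟨z₀, hz₀, rfl⟩ := hx₀mem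
    obtain ⟨x₁, hx₁mem, hx₁⟩ := exists_lt_of_lt_csSup
      ((Set.nonempty_of_mem hy₁).image (fun y => ∑ i, a i * y i)) hlt₁
    obtain ⟨z₁, hz₁, rfl⟩ := hx₁mem
    have hz : (1 - t) • z₀ + t • z₁ ∈ S := hmemS z₀ hz₀ z₁ hz₁
    have hfz := hfr _ (subset_closure hz)
    rw [hfy] at hfz
    have hsum : ∑ i, a i * ((1 - t) • z₀ + t • z₁) i
        = (1 - t) * ∑ i, a i * z₀ i + t * ∑ i, a i * z₁ i := by
      rw [Finset.mul_sum, Finset.mul_sum, ← Finset.sum_add_distrib]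
      refine Finset.sum_congr rfl fun i _ => ?_
      simp only [Pi.add_apply, Pi.smul_apply, smul_eq_mul]
      ring
    rw [hsum] at hfz
    nlinarith
  rw [hfy] at hrs
  linarith
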